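/- Let f : ℝ³ → (0,∞) be measurable with ∫_{ℝ³}(1+|v|²) f(v) dv < ∞, ρ_f > 0 and T_f > 0, and assume that v ↦ (𝓜(f)(v) − f(v)) ln f(v) is integrable on ℝ³. Then ∫_{ℝ³} (𝓜(f)(v) − f(v)) ln f(v) dv ≤ 0, and the dissipation ∫_{ℝ³} (𝓜(f)(v) − f(v))(ln 𝓜(f)(v) − ln f(v)) dv is nonnegative and equals −∫_{ℝ³} (𝓜(f) − f) ln f dv. -/

import Mathlib

open MeasureTheory Real
open scoped ENNReal

noncomputable section

/-- Velocity space `ℝ³`. -/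
abbrev E3 : Type := EuclideanSpace ℝ (Fin 3)

/-- Local density `ρ_f = ∫ f dv`. -/
def dens (f : E3 → ℝ) : ℝ := ∫ v, f v

/-- Bulk velocity `U_f`, defined by `ρ_f U_f = ∫ v f dv`. -/
def bulk (f : E3 → ℝ) : E3 := (dens f)⁻¹ • (∫ v, f v • v)

/-- Temperature `T_f`, defined by `3 ρ_f T_f = ∫ |v - U_f|² f dv`. -/
def temp (f : E3 → ℝ) : ℝ := (3 * dens f)⁻¹ * ∫ v, ‖v - bulk f‖ ^ 2 * f v

/-- The local Maxwellian `𝓜(f)(v) = ρ_f (2π T_f)^{-3/2} exp(-|v - U_f|²/(2 T_f))`. -/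
def maxw (f : E3 → ℝ) : E3 → ℝ := fun v =>
  dens f * (2 * π * temp f) ^ (-(3 : ℝ) / 2) * Real.exp (-‖v - bulk f‖ ^ 2 / (2 * temp f))


lemma integrable_gauss {b : ℝ} (hb : 0 < b) :
    Integrable (fun v : E3 => rexp (-b * ‖v‖ ^ 2)) := by
  have h := GaussianFourier.integrable_cexp_neg_mul_sq_norm_add (V := E3) (b := (b : ℂ))
    (by simpa using hb) 0 (0 : E3)
  refine h.norm.congr (Filter.Eventually.of_forall fun v => ?_)
  simp [Complex.norm_exp]
  left; norm_cast

lemma integrable_sq_gauss {b : ℝ} (hb : 0 < b) :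
    Integrable (fun v : E3 => ‖v‖ ^ 2 * rexp (-b * ‖v‖ ^ 2)) := by
  refine ((integrable_gauss (show 0 < b/2 by linarith)).const_mul (2/b)).mono'
    ?_ (Filter.Eventually.of_forall fun v => ?_)
  · exact (Measurable.aestronglyMeasurable (by fun_prop))
  · have h1 : ‖v‖ ^ 2 * rexp (-b * ‖v‖ ^ 2)
        = (‖v‖ ^ 2 * rexp (-(b/2) * ‖v‖ ^ 2)) * rexp (-(b/2) * ‖v‖ ^ 2) := by
      rw [mul_assoc, ← Real.exp_add]; ring_nf
    have h2 : ‖v‖ ^ 2 * rexp (-(b/2) * ‖v‖ ^ 2) ≤ 2 / b := by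
      have h3 := Real.add_one_le_exp ((b/2) * ‖v‖ ^ 2)
      have h4 : (b/2) * ‖v‖ ^ 2 ≤ rexp ((b/2) * ‖v‖ ^ 2) := by nlinarith
      rw [neg_mul, Real.exp_neg]
      rw [← sub_nonneg]
      have h5 : 0 < rexp ((b/2) * ‖v‖ ^ 2) := Real.exp_pos _
      have : 2/b - ‖v‖^2 * (rexp ((b/2) * ‖v‖^2))⁻¹
          = (2/b * rexp ((b/2)*‖v‖^2) - ‖v‖^2) / rexp ((b/2)*‖v‖^2) := by
        field_simp
      rw [this]
      apply div_nonneg _ h5.le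
      have h6 : 2 / b * (b / 2 * ‖v‖ ^ 2) ≤ 2 / b * rexp (b / 2 * ‖v‖ ^ 2) :=
        mul_le_mul_of_nonneg_left h4 (by positivity)
      have h7 : 2 / b * (b / 2 * ‖v‖ ^ 2) = ‖v‖ ^ 2 := by field_simp
      linarith
    have hpos : (0:ℝ) < rexp (-(b/2) * ‖v‖ ^ 2) := Real.exp_pos _
    have hle1 : rexp (-(b/2) * ‖v‖ ^ 2) ≤ 1 := by
      apply Real.exp_le_one_iff.mpr; nlinarith [sq_nonneg ‖v‖]
    rw [Real.norm_eq_abs, abs_of_nonneg (by positivity), h1]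
    calc (‖v‖ ^ 2 * rexp (-(b/2) * ‖v‖ ^ 2)) * rexp (-(b/2) * ‖v‖ ^ 2)
        ≤ (2/b) * rexp (-(b/2) * ‖v‖ ^ 2) := by
          apply mul_le_mul_of_nonneg_right h2 hpos.le
      _ = 2 / b * rexp (-(b / 2) * ‖v‖ ^ 2) := rfl


lemma ioi_gamma {b : ℝ} (hb : 0 < b) (q : ℕ) (hq : 0 < q) :
    ∫ y in Set.Ioi (0:ℝ), y ^ q * rexp (-b * y ^ 2)
      = b ^ (-((q:ℝ) + 1) / 2) * (1 / 2) * Real.Gamma (((q:ℝ) + 1) / 2) := by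
  rw [← integral_rpow_mul_exp_neg_mul_rpow (p := 2) (q := (q:ℝ)) (by norm_num)
    (by exact lt_of_lt_of_le (by norm_num) (Nat.cast_nonneg q)) hb]
  refine setIntegral_congr_fun measurableSet_Ioi fun x hx => ?_
  rw [Real.rpow_natCast, Real.rpow_two]

lemma sq_gauss_integral {b : ℝ} (hb : 0 < b) :
    ∫ v : E3, ‖v‖ ^ 2 * rexp (-b * ‖v‖ ^ 2)
      = (3 / (2 * b)) * ∫ v : E3, rexp (-b * ‖v‖ ^ 2) := by
  have h1 := integral_fun_norm_addHaar (volume : Measure E3)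
    (fun y : ℝ => y ^ 2 * rexp (-b * y ^ 2))
  have h2 := integral_fun_norm_addHaar (volume : Measure E3)
    (fun y : ℝ => rexp (-b * y ^ 2))
  have hdim : Module.finrank ℝ E3 = 3 := finrank_euclideanSpace_fin
  rw [hdim] at h1 h2
  simp only [smul_eq_mul, nsmul_eq_mul, Nat.cast_ofNat] at h1 h2
  rw [h1, h2]
  have e1 : ∫ y in Set.Ioi (0:ℝ), y ^ (3-1) * (y ^ 2 * rexp (-b * y ^ 2))
      = ∫ y in Set.Ioi (0:ℝ), y ^ 4 * rexp (-b * y ^ 2) := by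
    refine setIntegral_congr_fun measurableSet_Ioi fun x hx => ?_; ring
  have e2 : ∫ y in Set.Ioi (0:ℝ), y ^ (3-1) * rexp (-b * y ^ 2)
      = ∫ y in Set.Ioi (0:ℝ), y ^ 2 * rexp (-b * y ^ 2) := by norm_num
  rw [e1, e2, ioi_gamma hb 4 (by norm_num), ioi_gamma hb 2 (by norm_num)]
  have hg5 : (((4:ℕ):ℝ) + 1) / 2 = 3/2 + 1 := by norm_num
  have hg3 : (((2:ℕ):ℝ) + 1) / 2 = 3/2 := by norm_num
  have hG : Real.Gamma ((((4:ℕ):ℝ) + 1) / 2) = (3/2) * Real.Gamma (3/2) := by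
    rw [hg5, Real.Gamma_add_one (by norm_num)]
  have hbp : b ^ (-(((4:ℕ):ℝ) + 1) / 2) = b⁻¹ * b ^ (-(((2:ℕ):ℝ) + 1) / 2) := by
    rw [show (-(((4:ℕ):ℝ) + 1) / 2) = (-1) + (-(((2:ℕ):ℝ) + 1) / 2) by norm_num,
      Real.rpow_add hb, Real.rpow_neg_one]
  rw [hG, hbp, hg3]
  field_simp

/-- Entropy inequality: `∫ (𝓜(f) - f) ln f dv ≤ 0`, and the dissipation
`∫ (𝓜(f) - f)(ln 𝓜(f) - ln f) dv` is nonnegative and equals `-∫ (𝓜(f) - f) ln f dv`. -/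
theorem stmt_10 (f : E3 → ℝ) (hf : Measurable f) (hf0 : ∀ v, 0 < f v)
    (hint : Integrable (fun v => (1 + ‖v‖ ^ 2) * f v))
    (hρ : 0 < dens f) (hT : 0 < temp f)
    (hlog : Integrable (fun v => (maxw f v - f v) * Real.log (f v))) :
    (∫ v, (maxw f v - f v) * Real.log (f v)) ≤ 0 ∧
    0 ≤ ∫ v, (maxw f v - f v) * (Real.log (maxw f v) - Real.log (f v)) ∧
    (∫ v, (maxw f v - f v) * (Real.log (maxw f v) - Real.log (f v)))
      = -∫ v, (maxw f v - f v) * Real.log (f v) := by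
  set ρ := dens f with hρdef
  set U := bulk f with hUdef
  set T := temp f with hTdef
  set b : ℝ := (2 * T)⁻¹ with hbdef
  have hb : 0 < b := by positivity
  set c₀ : ℝ := ρ * (2 * π * T) ^ (-(3 : ℝ) / 2) with hc₀def
  have hc₀ : 0 < c₀ := by
    have : (0:ℝ) < (2 * π * T) ^ (-(3:ℝ)/2) :=
      Real.rpow_pos_of_pos (by positivity) _
    positivity
  have hM : ∀ v, maxw f v = c₀ * rexp (-b * ‖v - U‖ ^ 2) := by
    intro v
    simp only [maxw, hc₀def, hbdef]
    congr 1
    rw [neg_div, neg_mul, div_eq_inv_mul]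
  have hMpos : ∀ v, 0 < maxw f v := fun v => by
    rw [hM v]; positivity
  -- integrability of f and ‖v-U‖²f
  have hf_int : Integrable f := by
    refine hint.mono' hf.aestronglyMeasurable (Filter.Eventually.of_forall fun v => ?_)
    have := (hf0 v).le
    rw [Real.norm_eq_abs, abs_of_nonneg this]
    nlinarith [sq_nonneg ‖v‖]
  have hsqf_int : Integrable (fun v => ‖v - U‖ ^ 2 * f v) := by
    refine (hint.const_mul (2 + 2 * ‖U‖ ^ 2)).mono'
      (Measurable.aestronglyMeasurable (by fun_prop))
      (Filter.Eventually.of_forall fun v => ?_)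
    have h0 := (hf0 v).le
    have h1 : ‖v - U‖ ≤ ‖v‖ + ‖U‖ := norm_sub_le _ _
    rw [Real.norm_eq_abs, abs_of_nonneg (by positivity)]
    have h2 : ‖v - U‖ ^ 2 ≤ 2 * ‖v‖ ^ 2 + 2 * ‖U‖ ^ 2 := by
      nlinarith [sq_nonneg (‖v‖ - ‖U‖), norm_nonneg (v - U), norm_nonneg v, norm_nonneg U]
    have h3 : 2 * ‖v‖ ^ 2 + 2 * ‖U‖ ^ 2 ≤ (2 + 2 * ‖U‖ ^ 2) * (1 + ‖v‖ ^ 2) := by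
      nlinarith [sq_nonneg ‖v‖, sq_nonneg ‖U‖, sq_nonneg (‖U‖ * ‖v‖)]
    calc ‖v - U‖ ^ 2 * f v ≤ ((2 + 2 * ‖U‖ ^ 2) * (1 + ‖v‖ ^ 2)) * f v :=
          mul_le_mul_of_nonneg_right (le_trans h2 h3) h0
      _ = (2 + 2 * ‖U‖ ^ 2) * ((1 + ‖v‖ ^ 2) * f v) := by ring
  -- integrability of maxw and ‖v-U‖² maxw
  have hg_int : Integrable (fun v : E3 => rexp (-b * ‖v - U‖ ^ 2)) :=
    (integrable_gauss hb).comp_sub_right U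
  have hM_int : Integrable (maxw f) := by
    refine ((hg_int.const_mul c₀).congr (Filter.Eventually.of_forall fun v => ?_))
    rw [hM v]
  have hsqM_int : Integrable (fun v => ‖v - U‖ ^ 2 * maxw f v) := by
    have h := ((integrable_sq_gauss hb).comp_sub_right U).const_mul c₀
    refine h.congr (Filter.Eventually.of_forall fun v => ?_)
    show c₀ * (‖v - U‖ ^ 2 * rexp (-b * ‖v - U‖ ^ 2)) = ‖v - U‖ ^ 2 * maxw f v
    rw [hM v]; ring
  -- moment values
  have hIf : ∫ v, f v = ρ := rfl
  have hIsqf : ∫ v, ‖v - U‖ ^ 2 * f v = 3 * ρ * T := by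
    have : T = (3 * ρ)⁻¹ * ∫ v, ‖v - U‖ ^ 2 * f v := hTdef
    field_simp at this
    linarith
  have hIgauss : ∫ v : E3, rexp (-b * ‖v‖ ^ 2) = (π / b) ^ ((3:ℝ) / 2) := by
    have h := GaussianFourier.integral_rexp_neg_mul_sq_norm (V := E3) hb
    rwa [finrank_euclideanSpace_fin, Nat.cast_ofNat] at h
  have hπb : π / b = 2 * π * T := by
    rw [hbdef]; field_simp
  have hIM : ∫ v, maxw f v = ρ := by
    calc ∫ v, maxw f v = ∫ v, c₀ * rexp (-b * ‖v - U‖ ^ 2) := by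
          exact integral_congr_ae (Filter.Eventually.of_forall fun v => hM v)
      _ = c₀ * ∫ v : E3, rexp (-b * ‖v - U‖ ^ 2) := integral_const_mul _ _
      _ = c₀ * ∫ v : E3, rexp (-b * ‖v‖ ^ 2) := by
          congr 1
          exact integral_sub_right_eq_self (fun v : E3 => rexp (-b * ‖v‖ ^ 2)) U
      _ = ρ := by
          rw [hIgauss, hπb, hc₀def, mul_assoc, ← Real.rpow_add (by positivity)]
          norm_num
  have hIsqM : ∫ v, ‖v - U‖ ^ 2 * maxw f v = 3 * ρ * T := by
    calc ∫ v, ‖v - U‖ ^ 2 * maxw f v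
        = ∫ v, c₀ * (‖v - U‖ ^ 2 * rexp (-b * ‖v - U‖ ^ 2)) := by
          refine integral_congr_ae (Filter.Eventually.of_forall fun v => ?_)
          show ‖v - U‖ ^ 2 * maxw f v = c₀ * (‖v - U‖ ^ 2 * rexp (-b * ‖v - U‖ ^ 2))
          rw [hM v]; ring
      _ = c₀ * ∫ v : E3, ‖v - U‖ ^ 2 * rexp (-b * ‖v - U‖ ^ 2) := integral_const_mul _ _
      _ = c₀ * ∫ v : E3, ‖v‖ ^ 2 * rexp (-b * ‖v‖ ^ 2) := by
          congr 1
          exact integral_sub_right_eq_self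
            (fun v : E3 => ‖v‖ ^ 2 * rexp (-b * ‖v‖ ^ 2)) U
      _ = c₀ * ((3 / (2 * b)) * ∫ v : E3, rexp (-b * ‖v‖ ^ 2)) := by
          rw [sq_gauss_integral hb]
      _ = (3 / (2 * b)) * (c₀ * ∫ v : E3, rexp (-b * ‖v‖ ^ 2)) := by ring
      _ = (3 / (2 * b)) * ρ := by
          congr 1
          rw [hIgauss, hπb, hc₀def, mul_assoc, ← Real.rpow_add (by positivity)]
          norm_num
      _ = 3 * ρ * T := by
          rw [hbdef]; field_simp
  -- logarithm of the Maxwellian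
  have hlogM : ∀ v, Real.log (maxw f v) = Real.log c₀ + (-b * ‖v - U‖ ^ 2) := by
    intro v
    rw [hM v, Real.log_mul hc₀.ne' (Real.exp_ne_zero _), Real.log_exp]
  -- key rewriting of (M - f) log M
  have hrw : (fun v => (maxw f v - f v) * Real.log (maxw f v))
      = fun v => (Real.log c₀ * maxw f v - Real.log c₀ * f v
          - b * (‖v - U‖ ^ 2 * maxw f v)) + b * (‖v - U‖ ^ 2 * f v) := by
    funext v; rw [hlogM v]; ring
  have i1 : Integrable (fun v : E3 => Real.log c₀ * maxw f v) := hM_int.const_mul _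
  have i2 : Integrable (fun v : E3 => Real.log c₀ * f v) := hf_int.const_mul _
  have i3 : Integrable (fun v : E3 => b * (‖v - U‖ ^ 2 * maxw f v)) := hsqM_int.const_mul b
  have i4 : Integrable (fun v : E3 => b * (‖v - U‖ ^ 2 * f v)) := hsqf_int.const_mul b
  have i12 : Integrable (fun v : E3 => Real.log c₀ * maxw f v - Real.log c₀ * f v) := i1.sub i2
  have i123 : Integrable (fun v : E3 => Real.log c₀ * maxw f v - Real.log c₀ * f v
      - b * (‖v - U‖ ^ 2 * maxw f v)) := i12.sub i3
  have hDint : Integrable (fun v => (maxw f v - f v) * Real.log (maxw f v)) := by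
    rw [hrw]
    exact i123.add i4
  have hGkey : ∫ v, (maxw f v - f v) * Real.log (maxw f v) = 0 := by
    rw [hrw, integral_add i123 i4, integral_sub i12 i3, integral_sub i1 i2,
      integral_const_mul, integral_const_mul, integral_const_mul, integral_const_mul,
      hIM, hIf, hIsqM, hIsqf]
    ring
  -- third claim
  have hthird : (∫ v, (maxw f v - f v) * (Real.log (maxw f v) - Real.log (f v)))
      = -∫ v, (maxw f v - f v) * Real.log (f v) := by
    have : (fun v => (maxw f v - f v) * (Real.log (maxw f v) - Real.log (f v)))
        = fun v => (maxw f v - f v) * Real.log (maxw f v)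
            - (maxw f v - f v) * Real.log (f v) := by
      funext v; ring
    rw [this, integral_sub hDint hlog, hGkey, zero_sub]
  have hsecond : 0 ≤ ∫ v, (maxw f v - f v) * (Real.log (maxw f v) - Real.log (f v)) := by
    refine integral_nonneg fun v => ?_
    simp only [Pi.zero_apply]
    rcases le_total (f v) (maxw f v) with h | h
    · exact mul_nonneg (by linarith) (sub_nonneg.mpr (Real.log_le_log (hf0 v) h))
    · have h1 : maxw f v - f v ≤ 0 := by linarith
      have h2 : Real.log (maxw f v) - Real.log (f v) ≤ 0 :=
        sub_nonpos.mpr (Real.log_le_log (hMpos v) h)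
      nlinarith [mul_nonneg (neg_nonneg.2 h1) (neg_nonneg.2 h2)]
  exact ⟨by linarith [hthird ▸ hsecond], hsecond, hthird⟩

end
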